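/- Strong spectral stability of Burgers shock profiles (Proposition 1.3): For every ε > 0 and every λ ∈ ℂ with Re λ ≥ 0 and λ ≠ 0, the only twice continuously differentiable function w : ℝ → ℂ with w and w' square-integrable on ℝ that satisfies w''(x) = (d/dx)( ū^ε(x) w(x) ) + λ w(x) for all x ∈ ℝ is w ≡ 0. -/

import Mathlib

open MeasureTheory

/-- The Burgers viscous shock profile of amplitude `ε`. -/
noncomputable def burgersProfile (ε : ℝ) (x : ℝ) : ℝ := -ε * Real.tanh (ε * x / 2)

/-- **Strong spectral stability of Burgers shock profiles** (Proposition 1.3):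
for every `ε > 0` and every `λ` with `Re λ ≥ 0`, `λ ≠ 0`, the only `C²` solution
`w` of `w'' = (ū^ε w)' + λ w` with `w, w'` square integrable is `w ≡ 0`. -/
theorem burgers_strong_spectral_stability
    (ε : ℝ) (hε : 0 < ε)
    (lam : ℂ) (hre : 0 ≤ lam.re) (hlam : lam ≠ 0)
    (w : ℝ → ℂ) (hw : ContDiff ℝ 2 w)
    (hwL2 : MemLp w 2 volume) (hw'L2 : MemLp (deriv w) 2 volume)
    (heq : ∀ x : ℝ,
      deriv (deriv w) x
        = deriv (fun y => (burgersProfile ε y : ℂ) * w y) x + lam * w x) :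
    w = 0 := by
  classical
  set u : ℝ → ℝ := burgersProfile ε with hu_def
  have htanh : Real.tanh = fun x => Real.sinh x / Real.cosh x :=
    funext Real.tanh_eq_sinh_div_cosh
  have htanh_diff : Differentiable ℝ Real.tanh := by
    rw [htanh]
    exact Real.differentiable_sinh.div Real.differentiable_cosh
      (fun x => (Real.cosh_pos x).ne')
  have htanh_bd : ∀ x, |Real.tanh x| ≤ 1 := by
    intro x
    rw [Real.tanh_eq_sinh_div_cosh, abs_div, abs_of_pos (Real.cosh_pos x),
      div_le_one (Real.cosh_pos x)]
    nlinarith [Real.cosh_sq x, abs_nonneg (Real.sinh x), Real.cosh_pos x,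
      sq_abs (Real.sinh x)]
  have hu_diff : Differentiable ℝ u := by
    have : u = fun x => -ε * Real.tanh (ε * x / 2) := rfl
    rw [this]
    exact (htanh_diff.comp ((differentiable_id.const_mul ε).div_const 2)).const_mul _
  have hu_cont : Continuous u := hu_diff.continuous
  have hu_bd : ∀ x, |u x| ≤ ε := by
    intro x
    have : |u x| = ε * |Real.tanh (ε * x / 2)| := by
      rw [hu_def]; simp [burgersProfile, abs_mul, abs_of_pos hε]
    rw [this]
    calc ε * |Real.tanh (ε * x / 2)| ≤ ε * 1 :=
          mul_le_mul_of_nonneg_left (htanh_bd _) hε.le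
      _ = ε := mul_one ε
  have huC_diff : Differentiable ℝ (fun x => (u x : ℂ)) :=
    Complex.ofRealCLM.differentiable.comp hu_diff
  -- basic differentiability of w
  have hw_d : Differentiable ℝ w := hw.differentiable (by norm_num)
  have hw'_cd : ContDiff ℝ 1 (deriv w) :=
    ((contDiff_succ_iff_deriv (n := 1)).mp (by exact_mod_cast hw)).2.2
  have hw'_d : Differentiable ℝ (deriv w) := hw'_cd.differentiable one_ne_zero
  -- the product u * w
  have hg_d : Differentiable ℝ (fun y => (u y : ℂ) * w y) := huC_diff.mul hw_d
  -- the integrated variable W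
  set W : ℝ → ℂ := fun x => lam⁻¹ * (deriv w x - (u x : ℂ) * w x) with hW_def
  have hW_eq : ∀ x, lam * W x = deriv w x - (u x : ℂ) * w x := by
    intro x
    rw [hW_def]
    field_simp
  have hW_d : Differentiable ℝ W :=
    ((hw'_d.sub hg_d).const_mul lam⁻¹)
  have hW' : ∀ x, deriv W x = w x := by
    intro x
    have h1 : deriv (fun y => deriv w y - (u y : ℂ) * w y) x
        = deriv (deriv w) x - deriv (fun y => (u y : ℂ) * w y) x :=
      deriv_sub (hw'_d x) (hg_d x)
    have h2 : deriv W x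
        = lam⁻¹ * deriv (fun y => deriv w y - (u y : ℂ) * w y) x := by
      rw [hW_def]
      exact deriv_const_mul lam⁻¹ ((hw'_d x).sub (hg_d x))
    rw [h2, h1]
    have h3 := heq x
    have : deriv (deriv w) x - deriv (fun y => (u y : ℂ) * w y) x = lam * w x := by
      rw [h3]; ring
    rw [this, ← mul_assoc, inv_mul_cancel₀ hlam, one_mul]
  have hWd : ∀ x, HasDerivAt W (w x) x := by
    intro x
    have := (hW_d x).hasDerivAt
    rwa [hW' x] at this
  have hwd : ∀ x, HasDerivAt w (deriv w x) x := fun x => (hw_d x).hasDerivAt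
  have hode : ∀ x, deriv w x = lam * W x + (u x : ℂ) * w x := by
    intro x
    rw [hW_eq x]
    ring
  -- the square modulus of W and its derivatives
  set c : ℂ →+* ℂ := starRingEnd ℂ with hc_def
  set v : ℝ → ℝ := fun x => (c (W x) * W x).re with hv_def
  set v1 : ℝ → ℝ := fun x => (c (w x) * W x + c (W x) * w x).re with hv1_def
  set v2 : ℝ → ℝ := fun x =>
    (c (deriv w x) * W x + c (w x) * w x
      + (c (w x) * w x + c (W x) * deriv w x)).re with hv2_def
  have hvd : ∀ x, HasDerivAt v (v1 x) x := by
    intro x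
    have hF : HasDerivAt (fun y => c (W y) * W y)
        (c (w x) * W x + c (W x) * w x) x := ((hWd x).star.mul (hWd x))
    exact Complex.reCLM.hasFDerivAt.comp_hasDerivAt x hF
  have hv1d : ∀ x, HasDerivAt v1 (v2 x) x := by
    intro x
    have hF : HasDerivAt (fun y => c (w y) * W y + c (W y) * w y)
        (c (deriv w x) * W x + c (w x) * w x
          + (c (w x) * w x + c (W x) * deriv w x)) x :=
      ((hwd x).star.mul (hWd x)).add ((hWd x).star.mul (hwd x))
    exact Complex.reCLM.hasFDerivAt.comp_hasDerivAt x hF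
  have hv_eq : ∀ x, v x = ‖W x‖ ^ 2 := by
    intro x
    rw [hv_def]
    simp only [hc_def]
    rw [show (starRingEnd ℂ) (W x) * W x = ((Complex.normSq (W x) : ℝ) : ℂ) by
      rw [mul_comm, Complex.mul_conj]]
    rw [Complex.ofReal_re, ← Complex.sq_norm]
  have hv_nonneg : ∀ x, 0 ≤ v x := by
    intro x; rw [hv_eq x]; positivity
  -- key differential inequality : v2 - u * v1 ≥ 0
  have hkey : ∀ x, v2 x - u x * v1 x
      = 2 * lam.re * Complex.normSq (W x) + 2 * Complex.normSq (w x) := by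
    intro x
    simp only [hv2_def, hv1_def, hode x]
    simp only [hc_def, Complex.mul_re, Complex.add_re, Complex.add_im, Complex.mul_im,
      Complex.conj_re, Complex.conj_im, Complex.normSq_apply,
      Complex.ofReal_re, Complex.ofReal_im]
    ring
  have hkey_nonneg : ∀ x, 0 ≤ v2 x - u x * v1 x := by
    intro x
    rw [hkey x]
    have := Complex.normSq_nonneg (W x)
    have := Complex.normSq_nonneg (w x)
    nlinarith
  -- the monotone auxiliary function φ = v1 * cosh²
  set φ : ℝ → ℝ := fun x => v1 x * (Real.cosh (ε * x / 2)) ^ 2 with hφ_def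
  have hcosh_d : ∀ x : ℝ, HasDerivAt (fun y => (Real.cosh (ε * y / 2)) ^ 2)
      (2 * Real.cosh (ε * x / 2) * (Real.sinh (ε * x / 2) * (ε / 2))) x := by
    intro x
    have hinner : HasDerivAt (fun y : ℝ => ε * y / 2) (ε / 2) x := by
      simpa using ((hasDerivAt_id x).const_mul ε).div_const 2
    have h1 : HasDerivAt (fun y => Real.cosh (ε * y / 2))
        (Real.sinh (ε * x / 2) * (ε / 2)) x :=
      (Real.hasDerivAt_cosh _).comp x hinner
    have := h1.fun_pow 2
    simpa [mul_comm, mul_assoc, mul_left_comm] using this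
  have hφd : ∀ x, HasDerivAt φ
      (v2 x * (Real.cosh (ε * x / 2)) ^ 2
        + v1 x * (2 * Real.cosh (ε * x / 2) * (Real.sinh (ε * x / 2) * (ε / 2)))) x :=
    fun x => (hv1d x).mul (hcosh_d x)
  have hφ'_eq : ∀ x, v2 x * (Real.cosh (ε * x / 2)) ^ 2
        + v1 x * (2 * Real.cosh (ε * x / 2) * (Real.sinh (ε * x / 2) * (ε / 2)))
      = (Real.cosh (ε * x / 2)) ^ 2 * (v2 x - u x * v1 x) := by
    intro x
    have hc0 : Real.cosh (ε * x / 2) ≠ 0 := (Real.cosh_pos _).ne'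
    have hu_val : u x = -ε * (Real.sinh (ε * x / 2) / Real.cosh (ε * x / 2)) := by
      rw [hu_def]
      simp only [burgersProfile]
      rw [Real.tanh_eq_sinh_div_cosh]
    rw [hu_val]
    field_simp
    ring
  have hφ_mono : Monotone φ := by
    apply monotone_of_deriv_nonneg
    · exact fun x => (hφd x).differentiableAt
    · intro x
      rw [(hφd x).deriv, hφ'_eq x]
      exact mul_nonneg (sq_nonneg _) (hkey_nonneg x)
  -- W is square integrable
  have hgm : AEStronglyMeasurable (fun x => (u x : ℂ) * w x) volume :=
    ((Complex.continuous_ofReal.comp hu_cont).mul hw_d.continuous).aestronglyMeasurable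
  have hgL2 : MemLp (fun x => (u x : ℂ) * w x) 2 volume := by
    apply MemLp.of_le_mul hwL2 hgm (c := ε)
    filter_upwards with x
    simp only [norm_mul, Complex.norm_real, Real.norm_eq_abs]
    exact mul_le_mul_of_nonneg_right (hu_bd x) (norm_nonneg _)
  have hWL2 : MemLp W 2 volume := by
    have h1 : MemLp (deriv w - fun x => (u x : ℂ) * w x) 2 volume := hw'L2.sub hgL2
    have h2 := h1.const_mul lam⁻¹
    exact h2
  have hInt : Integrable (fun x => ‖W x‖ ^ 2) volume :=
    (memLp_two_iff_integrable_sq_norm hWL2.aestronglyMeasurable).mp hWL2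
  -- lower-bound contradiction lemma
  have hcontra : ∀ (a : ℝ) (s : Set ℝ), volume s = ⊤ → (∀ x ∈ s, v a ≤ v x) →
      0 < v a → False := by
    intro a s hs hle hva
    have hsub : s ⊆ {x | v a ≤ ‖(fun y => ‖W y‖ ^ 2) x‖} := by
      intro x hx
      have := hle x hx
      simp only [Set.mem_setOf_eq, Real.norm_eq_abs]
      rw [abs_of_nonneg (by positivity)]
      rw [hv_eq x] at this
      exact this
    have hfin : volume {x | v a ≤ ‖(fun y => ‖W y‖ ^ 2) x‖} < ⊤ := by
      have := hInt.norm.measure_ge_lt_top hva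
      simpa using this
    have := (measure_mono hsub).trans_lt hfin
    rw [hs] at this
    exact lt_irrefl _ this
  have hv_diff : Differentiable ℝ v := fun x => (hvd x).differentiableAt
  -- v vanishes identically
  have hv0 : ∀ x, v x = 0 := by
    intro a
    by_contra hva
    have hva' : 0 < v a := lt_of_le_of_ne (hv_nonneg a) (Ne.symm hva)
    rcases le_or_gt 0 (v1 a) with h1 | h1
    · -- v is nondecreasing on [a, ∞)
      have hφa : 0 ≤ φ a := mul_nonneg h1 (sq_nonneg _)
      have hv1pos : ∀ x ∈ Set.Ici a, 0 ≤ deriv v x := by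
        intro x hx
        rw [(hvd x).deriv]
        have hφx : 0 ≤ φ x := hφa.trans (hφ_mono hx)
        simp only [hφ_def] at hφx
        have hc2 : 0 < (Real.cosh (ε * x / 2)) ^ 2 := by positivity
        nlinarith [hφx, hc2]
      have hmono : MonotoneOn v (Set.Ici a) :=
        monotoneOn_of_deriv_nonneg (convex_Ici a)
          hv_diff.continuous.continuousOn
          (fun x _ => (hvd x).differentiableAt.differentiableWithinAt)
          (fun x hx => hv1pos x (interior_subset hx))
      exact hcontra a (Set.Ici a) (by simp) (fun x hx => hmono Set.self_mem_Ici hx hx) hva'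
    · -- v is nonincreasing on (-∞, a]
      have hφa : φ a < 0 := mul_neg_of_neg_of_pos h1 (by positivity)
      have hv1neg : ∀ x ∈ Set.Iic a, deriv v x ≤ 0 := by
        intro x hx
        rw [(hvd x).deriv]
        have hφx : φ x < 0 := (hφ_mono hx).trans_lt hφa
        simp only [hφ_def] at hφx
        have hc2 : 0 < (Real.cosh (ε * x / 2)) ^ 2 := by positivity
        nlinarith [hφx, hc2]
      have hmono : AntitoneOn v (Set.Iic a) :=
        antitoneOn_of_deriv_nonpos (convex_Iic a)
          hv_diff.continuous.continuousOn
          (fun x _ => (hvd x).differentiableAt.differentiableWithinAt)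
          (fun x hx => hv1neg x (interior_subset hx))
      exact hcontra a (Set.Iic a) (by simp) (fun x hx => hmono hx Set.self_mem_Iic hx) hva'
  -- hence W ≡ 0, hence w = W' ≡ 0
  have hW0 : W = fun _ => (0 : ℂ) := by
    funext x
    have := hv0 x
    rw [hv_eq x] at this
    have : ‖W x‖ = 0 := by nlinarith [norm_nonneg (W x)]
    simpa using this
  funext x
  have hx := hW' x
  rw [hW0] at hx
  simp only [deriv_const'] at hx
  simp [← hx]
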